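/- Define φ(x) = (√3/π) ∫₀ˣ (arctan u³)/u² du for x ≥ 0 (with the integrand extended by continuity at 0). Then 0 < φ(x) < 1 for all x ∈ (0,∞), and φ(x) → 1 as x → ∞. -/

import Mathlib

open Filter Real

/-- φ(x) = (√3/π) ∫₀ˣ (arctan u³)/u² du.  (The integrand takes the value 0 at u = 0,
which agrees with the continuous extension since arctan(u³)/u² → 0 as u → 0.) -/
noncomputable def phi (x : ℝ) : ℝ :=
  (Real.sqrt 3 / π) * ∫ u in (0:ℝ)..x, Real.arctan (u ^ 3) / u ^ 2

open Set intervalIntegral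

lemma quart_pos (u : ℝ) : 0 < u ^ 4 - u ^ 2 + 1 := by nlinarith [sq_nonneg (2 * u ^ 2 - 1)]

lemma arctan_lt_self {t : ℝ} (ht : 0 < t) : Real.arctan t < t := by
  have h0 : 0 < Real.arctan t := by
    have := Real.arctan_strictMono ht
    simpa using this
  calc Real.arctan t < Real.tan (Real.arctan t) :=
        Real.lt_tan h0 (Real.arctan_lt_pi_div_two t)
    _ = t := Real.tan_arctan t

lemma abs_arctan_le (t : ℝ) : |Real.arctan t| ≤ |t| := by
  rcases lt_trichotomy t 0 with h | rfl | h
  · have : Real.arctan (-t) < -t := arctan_lt_self (by linarith)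
    rw [Real.arctan_neg] at this
    rw [abs_of_neg h, abs_of_neg (by nlinarith [Real.arctan_strictMono h, Real.arctan_zero] : Real.arctan t < 0)]
    linarith
  · simp
  · rw [abs_of_pos h, abs_of_pos (by simpa using Real.arctan_strictMono h)]
    exact (arctan_lt_self h).le

noncomputable def fI (u : ℝ) : ℝ := Real.arctan (u ^ 3) / u ^ 2

lemma abs_fI_le (u : ℝ) : |fI u| ≤ |u| := by
  rcases eq_or_ne u 0 with rfl | hu
  · simp [fI]
  · have h2 : (0:ℝ) < u ^ 2 := by positivity
    rw [fI, abs_div, abs_of_pos h2, div_le_iff₀ h2]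
    calc |Real.arctan (u ^ 3)| ≤ |u ^ 3| := abs_arctan_le _
      _ = |u| * u ^ 2 := by rw [show u ^ 3 = u * u ^ 2 by ring, abs_mul, abs_of_pos h2]

lemma cont_fI : Continuous fI := by
  rw [continuous_iff_continuousAt]
  intro u
  rcases eq_or_ne u 0 with rfl | hu
  · have : Tendsto fI (nhds 0) (nhds 0) :=
      squeeze_zero_norm (fun u => by simpa using abs_fI_le u) (by simpa using (continuous_abs.tendsto (0:ℝ)))
    simpa [ContinuousAt, fI] using this
  · exact ContinuousAt.div ((Real.continuous_arctan.comp (continuous_pow 3)).continuousAt) (by fun_prop) (pow_ne_zero 2 hu)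

noncomputable def FF (u : ℝ) : ℝ :=
  -(Real.arctan (u ^ 3) / u) + (1 / 2) * Real.log (1 + u ^ 2)
    - (1 / 4) * Real.log (u ^ 4 - u ^ 2 + 1)
    + (Real.sqrt 3 / 2) * Real.arctan ((2 * u ^ 2 - 1) / Real.sqrt 3)

lemma cont_FF : Continuous FF := by
  have h1 : Continuous fun u : ℝ => Real.arctan (u ^ 3) / u := by
    rw [continuous_iff_continuousAt]
    intro u
    rcases eq_or_ne u 0 with rfl | hu
    · have hb : ∀ v : ℝ, |Real.arctan (v ^ 3) / v| ≤ v ^ 2 := by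
        intro v
        rcases eq_or_ne v 0 with rfl | hv
        · simp
        · rw [abs_div, div_le_iff₀ (abs_pos.2 hv)]
          calc |Real.arctan (v ^ 3)| ≤ |v ^ 3| := abs_arctan_le _
            _ = v ^ 2 * |v| := by rw [show v ^ 3 = v ^ 2 * v by ring, abs_mul, abs_of_nonneg (sq_nonneg v)]
      have : Tendsto (fun u : ℝ => Real.arctan (u ^ 3) / u) (nhds 0) (nhds 0) :=
        squeeze_zero_norm hb (by simpa using ((continuous_pow 2).tendsto (0:ℝ)))
      simpa [ContinuousAt] using this
    · exact ContinuousAt.div ((Real.continuous_arctan.comp (continuous_pow 3)).continuousAt) (by fun_prop) hu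
  have h2 : Continuous fun u : ℝ => Real.log (1 + u ^ 2) := by
    apply Continuous.log (by fun_prop)
    intro u; positivity
  have h3 : Continuous fun u : ℝ => Real.log (u ^ 4 - u ^ 2 + 1) := by
    apply Continuous.log (by fun_prop)
    intro u; exact (quart_pos u).ne'
  have h4 : Continuous fun u : ℝ => Real.arctan ((2 * u ^ 2 - 1) / Real.sqrt 3) :=
    Real.continuous_arctan.comp (by fun_prop)
  unfold FF
  continuity

lemma FF_deriv {u : ℝ} (hu : 0 < u) : HasDerivAt FF (fI u) u := by
  have hu0 : u ≠ 0 := hu.ne'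
  have hq : u ^ 4 - u ^ 2 + 1 ≠ 0 := (quart_pos u).ne'
  have h16 : (1 : ℝ) + u ^ 2 ≠ 0 := by positivity
  have h6 : (1 : ℝ) + (u ^ 3) ^ 2 ≠ 0 := by positivity
  have s3 : Real.sqrt 3 ^ 2 = 3 := Real.sq_sqrt (by norm_num)
  have hs : Real.sqrt 3 ≠ 0 := by positivity
  -- term 1 : -(arctan (u^3) / u)
  have hcube : HasDerivAt (fun u : ℝ => u ^ 3) (3 * u ^ 2) u := by
    simpa using hasDerivAt_pow 3 u
  have h1 : HasDerivAt (fun u : ℝ => -(Real.arctan (u ^ 3) / u))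
      (-((1 / (1 + (u ^ 3) ^ 2) * (3 * u ^ 2) * u - Real.arctan (u ^ 3) * 1) / u ^ 2)) u :=
    ((hcube.arctan).div (hasDerivAt_id u) hu0).neg
  -- term 2
  have h2 : HasDerivAt (fun u : ℝ => (1 / 2) * Real.log (1 + u ^ 2))
      ((1 / 2) * ((2 * u) / (1 + u ^ 2))) u := by
    have : HasDerivAt (fun u : ℝ => 1 + u ^ 2) (2 * u) u := by
      simpa using ((hasDerivAt_pow 2 u).const_add 1)
    exact (this.log h16).const_mul _
  -- term 3
  have h3 : HasDerivAt (fun u : ℝ => (1 / 4) * Real.log (u ^ 4 - u ^ 2 + 1))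
      ((1 / 4) * ((4 * u ^ 3 - 2 * u) / (u ^ 4 - u ^ 2 + 1))) u := by
    have : HasDerivAt (fun u : ℝ => u ^ 4 - u ^ 2 + 1) (4 * u ^ 3 - 2 * u) u := by
      have := ((hasDerivAt_pow 4 u).sub (hasDerivAt_pow 2 u)).add_const 1
      simpa using this
    exact (this.log hq).const_mul _
  -- term 4
  have h4 : HasDerivAt (fun u : ℝ => (Real.sqrt 3 / 2) * Real.arctan ((2 * u ^ 2 - 1) / Real.sqrt 3))
      (3 * u / (2 * (u ^ 4 - u ^ 2 + 1))) u := by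
    have hin : HasDerivAt (fun u : ℝ => (2 * u ^ 2 - 1) / Real.sqrt 3) (4 * u / Real.sqrt 3) u := by
      have : HasDerivAt (fun u : ℝ => 2 * u ^ 2 - 1) (4 * u) u := by
        have := ((hasDerivAt_pow 2 u).const_mul 2).sub_const 1
        simpa using this.congr_deriv (by ring)
      exact this.div_const _
    have harc := hin.arctan
    have hden : 1 + ((2 * u ^ 2 - 1) / Real.sqrt 3) ^ 2 = 4 * (u ^ 4 - u ^ 2 + 1) / 3 := by
      rw [div_pow, s3]; field_simp; ring
    have := (harc.const_mul (Real.sqrt 3 / 2))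
    refine this.congr_deriv ?_
    rw [hden]
    field_simp
  have := ((h1.add h2).sub h3).add h4
  refine this.congr_deriv ?_
  unfold fI
  have e : (1:ℝ) + (u ^ 3) ^ 2 = (1 + u ^ 2) * (u ^ 4 - u ^ 2 + 1) := by ring
  rw [e]
  generalize hD : u ^ 4 - u ^ 2 + 1 = D at *
  field_simp
  rw [← hD]
  ring

lemma integral_fI {x : ℝ} (hx : 0 ≤ x) : ∫ u in (0:ℝ)..x, fI u = FF x - FF 0 := by
  apply intervalIntegral.integral_eq_sub_of_hasDeriv_right_of_le hx
    (cont_FF.continuousOn)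
    (fun u hu => (FF_deriv hu.1).hasDerivWithinAt)
    (cont_fI.intervalIntegrable 0 x)

lemma arctan_sqrt3_inv : Real.arctan (1 / Real.sqrt 3) = π / 6 := by
  rw [← Real.tan_pi_div_six, Real.arctan_tan]
  · linarith [Real.pi_pos]
  · linarith [Real.pi_pos]

lemma FF_zero : FF 0 = -(Real.sqrt 3 * π / 12) := by
  have : ((2 * (0:ℝ) ^ 2 - 1) / Real.sqrt 3) = -(1 / Real.sqrt 3) := by ring
  rw [FF, this, Real.arctan_neg, arctan_sqrt3_inv]
  norm_num
  ring

lemma FF_tendsto : Tendsto FF atTop (nhds (Real.sqrt 3 * π / 4)) := by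
  have hs : (0:ℝ) < Real.sqrt 3 := by positivity
  have t1 : Tendsto (fun u : ℝ => Real.arctan (u ^ 3) / u) atTop (nhds 0) := by
    apply squeeze_zero_norm' ?_ (Tendsto.div_atTop (tendsto_const_nhds (x := π / 2)) tendsto_id)
    filter_upwards [eventually_gt_atTop (0:ℝ)] with u hu
    rw [Real.norm_eq_abs, abs_div, abs_of_pos hu]
    gcongr
    · exact abs_le.2 ⟨(Real.neg_pi_div_two_lt_arctan _).le, (Real.arctan_lt_pi_div_two _).le⟩
    · exact le_rfl
  have te : Tendsto (fun u : ℝ => 3 * u ^ 2 / (u ^ 4 - u ^ 2 + 1)) atTop (nhds 0) := by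
    apply squeeze_zero_norm' ?_
      (Tendsto.div_atTop (tendsto_const_nhds (x := (6:ℝ))) (tendsto_pow_atTop two_ne_zero))
    filter_upwards [eventually_ge_atTop (2:ℝ)] with u hu
    have hu2 : (4:ℝ) ≤ u ^ 2 := by nlinarith
    have hD : u ^ 4 / 2 ≤ u ^ 4 - u ^ 2 + 1 := by nlinarith
    have hDpos := quart_pos u
    rw [Real.norm_eq_abs, abs_of_nonneg (by positivity)]
    rw [div_le_div_iff₀ hDpos (by positivity)]
    nlinarith
  have tr : Tendsto (fun u : ℝ => (1 + u ^ 2) ^ 2 / (u ^ 4 - u ^ 2 + 1)) atTop (nhds 1) := by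
    have : ∀ u : ℝ, (1 + u ^ 2) ^ 2 / (u ^ 4 - u ^ 2 + 1)
        = 1 + 3 * u ^ 2 / (u ^ 4 - u ^ 2 + 1) := by
      intro u
      rw [one_add_div (quart_pos u).ne']
      congr 1; ring
    simp only [this]
    simpa using (tendsto_const_nhds (x := (1:ℝ))).add te
  have tlog : Tendsto (fun u : ℝ => (1 / 2) * Real.log (1 + u ^ 2)
      - (1 / 4) * Real.log (u ^ 4 - u ^ 2 + 1)) atTop (nhds 0) := by
    have heq : ∀ u : ℝ, (1 / 2) * Real.log (1 + u ^ 2) - (1 / 4) * Real.log (u ^ 4 - u ^ 2 + 1)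
        = (1 / 4) * Real.log ((1 + u ^ 2) ^ 2 / (u ^ 4 - u ^ 2 + 1)) := by
      intro u
      have h1 : (0:ℝ) < 1 + u ^ 2 := by positivity
      rw [Real.log_div (by positivity) (quart_pos u).ne', Real.log_pow]
      push_cast
      ring
    simp only [heq]
    have : Tendsto (fun u : ℝ => Real.log ((1 + u ^ 2) ^ 2 / (u ^ 4 - u ^ 2 + 1)))
        atTop (nhds 0) := by
      have := (Real.continuousAt_log one_ne_zero).tendsto.comp tr
      simpa [Function.comp_def] using this
    simpa using this.const_mul (1 / 4 : ℝ)
  have t4 : Tendsto (fun u : ℝ => Real.arctan ((2 * u ^ 2 - 1) / Real.sqrt 3)) atTop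
      (nhds (π / 2)) := by
    have hinner : Tendsto (fun u : ℝ => (2 * u ^ 2 - 1) / Real.sqrt 3) atTop atTop := by
      apply Tendsto.atTop_div_const hs
      apply tendsto_atTop_add_const_right
      exact (tendsto_pow_atTop two_ne_zero).const_mul_atTop two_pos
    exact (Real.tendsto_arctan_atTop.mono_right nhdsWithin_le_nhds).comp hinner
  have total := ((t1.neg.add tlog).add (t4.const_mul (Real.sqrt 3 / 2)))
  have hval : -(0:ℝ) + 0 + Real.sqrt 3 / 2 * (π / 2) = Real.sqrt 3 * π / 4 := by ring
  rw [hval] at total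
  apply total.congr
  intro u
  unfold FF
  ring

lemma fI_pos {u : ℝ} (hu : 0 < u) : 0 < fI u := by
  have h1 : 0 < Real.arctan (u ^ 3) := by
    have := Real.arctan_strictMono (show (0:ℝ) < u ^ 3 by positivity)
    simpa using this
  exact div_pos h1 (by positivity)

lemma FF_strict {x y : ℝ} (hx : 0 < x) (hxy : x < y) : FF x < FF y := by
  have heq : ∫ u in x..y, fI u = FF y - FF x := by
    rw [intervalIntegral.integral_eq_sub_of_hasDerivAt (fun u hu => ?_)
      (cont_fI.intervalIntegrable x y)]
    rw [Set.uIcc_of_le hxy.le] at hu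
    exact FF_deriv (lt_of_lt_of_le hx hu.1)
  have hpos : 0 < ∫ u in x..y, fI u :=
    intervalIntegral.intervalIntegral_pos_of_pos_on (cont_fI.intervalIntegrable x y)
      (fun u hu => fI_pos (hx.trans hu.1)) hxy
  linarith [heq ▸ hpos]

lemma FF_lt_limit {x : ℝ} (hx : 0 < x) : FF x < Real.sqrt 3 * π / 4 := by
  have h1 : FF x < FF (x + 1) := FF_strict hx (by linarith)
  have h2 : FF (x + 1) ≤ Real.sqrt 3 * π / 4 := by
    apply ge_of_tendsto FF_tendsto
    filter_upwards [eventually_gt_atTop (x + 1)] with y hy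
    exact (FF_strict (by linarith) hy).le
  linarith

theorem phi_mem_Ioo_and_tendsto_one :
    (∀ x > 0, 0 < phi x ∧ phi x < 1) ∧ Tendsto phi atTop (nhds 1) := by
  have hpi := Real.pi_pos
  have hs : (0:ℝ) < Real.sqrt 3 := by positivity
  have hss : Real.sqrt 3 * Real.sqrt 3 = 3 := Real.mul_self_sqrt (by norm_num)
  have hphi : ∀ x : ℝ, 0 ≤ x → phi x = (Real.sqrt 3 / π) * (FF x + Real.sqrt 3 * π / 12) := by
    intro x hx
    rw [phi, show (∫ u in (0:ℝ)..x, Real.arctan (u ^ 3) / u ^ 2) = ∫ u in (0:ℝ)..x, fI u from rfl,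
      integral_fI hx, FF_zero]
    ring
  have hone : (Real.sqrt 3 / π) * (Real.sqrt 3 * π / 4 + Real.sqrt 3 * π / 12) = 1 := by
    field_simp
    nlinarith [hss]
  constructor
  · intro x hx
    rw [hphi x hx.le]
    constructor
    · apply mul_pos (by positivity)
      have : 0 < ∫ u in (0:ℝ)..x, fI u :=
        intervalIntegral.intervalIntegral_pos_of_pos_on (cont_fI.intervalIntegrable 0 x)
          (fun u hu => fI_pos hu.1) hx
      rw [integral_fI hx.le, FF_zero] at this
      linarith
    · calc (Real.sqrt 3 / π) * (FF x + Real.sqrt 3 * π / 12)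
          < (Real.sqrt 3 / π) * (Real.sqrt 3 * π / 4 + Real.sqrt 3 * π / 12) := by
            apply mul_lt_mul_of_pos_left _ (by positivity)
            linarith [FF_lt_limit hx]
        _ = 1 := hone
  · have : Tendsto (fun x : ℝ => (Real.sqrt 3 / π) * (FF x + Real.sqrt 3 * π / 12)) atTop
        (nhds ((Real.sqrt 3 / π) * (Real.sqrt 3 * π / 4 + Real.sqrt 3 * π / 12))) :=
      ((FF_tendsto.add tendsto_const_nhds).const_mul _)
    rw [hone] at this
    apply this.congr'
    filter_upwards [eventually_ge_atTop (0:ℝ)] with x hx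
    exact (hphi x hx).symm
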